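/- Suppose F is locally Lipschitzian at x̄ and WMax(F(x̄),K) ≠ ∅. Then the scalarizing functional f_{u,x̄} is locally Lipschitzian at x̄, i.e., there is a neighborhood of x̄ on which f_{u,x̄} is finite and Lipschitzian. -/

import Mathlib

open Set Topology Metric Pointwise

/-- The Gerstewitz (Tammer) scalarizing functional `Ψ_e(y) = inf {t : y ∈ t•e - K}`. -/
noncomputable def psiE {Y : Type*} [NormedAddCommGroup Y] [NormedSpace ℝ Y]
    (K : Set Y) (e : Y) (y : Y) : ℝ :=
  sInf {t : ℝ | t • e - y ∈ K}

/-- The lower inner function `g_l(x,z) = inf_{y ∈ F x} Ψ_e (y - z)` (with values in `EReal`). -/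
noncomputable def glow {X Y : Type*} [NormedAddCommGroup X] [NormedSpace ℝ X]
    [NormedAddCommGroup Y] [NormedSpace ℝ Y]
    (K : Set Y) (e : Y) (F : X → Set Y) (x : X) (z : Y) : EReal :=
  ⨅ y ∈ F x, (psiE K e (y - z) : EReal)

/-- The upper inner function `g_{u,x̄}(y) = inf_{ȳ ∈ F x̄} Ψ_e (y - ȳ)`. -/
noncomputable def gupp {X Y : Type*} [NormedAddCommGroup X] [NormedSpace ℝ X]
    [NormedAddCommGroup Y] [NormedSpace ℝ Y]
    (K : Set Y) (e : Y) (F : X → Set Y) (xbar : X) (y : Y) : EReal :=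
  ⨅ yb ∈ F xbar, (psiE K e (y - yb) : EReal)

/-- The lower scalarizing functional `f_{l,x̄}(x) = sup_{ȳ ∈ F x̄} g_l(x, ȳ)`. -/
noncomputable def flow {X Y : Type*} [NormedAddCommGroup X] [NormedSpace ℝ X]
    [NormedAddCommGroup Y] [NormedSpace ℝ Y]
    (K : Set Y) (e : Y) (F : X → Set Y) (xbar : X) (x : X) : EReal :=
  ⨆ yb ∈ F xbar, glow K e F x yb

/-- The upper scalarizing functional `f_{u,x̄}(x) = sup_{y ∈ F x} g_{u,x̄}(y)`. -/
noncomputable def fupp {X Y : Type*} [NormedAddCommGroup X] [NormedSpace ℝ X]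
    [NormedAddCommGroup Y] [NormedSpace ℝ Y]
    (K : Set Y) (e : Y) (F : X → Set Y) (xbar : X) (x : X) : EReal :=
  ⨆ y ∈ F x, gupp K e F xbar y

/-- Weakly minimal elements: `WMin(A,K) = {a ∈ A : (a - int K) ∩ A = ∅}`. -/
def wMinSet {Y : Type*} [NormedAddCommGroup Y] (A K : Set Y) : Set Y :=
  {a ∈ A | ∀ b ∈ A, a - b ∉ interior K}

/-- Weakly maximal elements: `WMax(A,K) = {a ∈ A : (a + int K) ∩ A = ∅}`. -/
def wMaxSet {Y : Type*} [NormedAddCommGroup Y] (A K : Set Y) : Set Y :=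
  {a ∈ A | ∀ b ∈ A, b - a ∉ interior K}

/-- Minimal elements: `Min(A,K) = {a ∈ A : (a - K) ∩ A = {a}}`. -/
def minSet {Y : Type*} [AddGroup Y] (A K : Set Y) : Set Y :=
  {a ∈ A | ∀ b ∈ A, a - b ∈ K → b = a}

section scalHelp
variable {Y : Type*} [NormedAddCommGroup Y] [NormedSpace ℝ Y]
variable {K : Set Y} {e : Y} {r : ℝ}

private lemma addK (hKcv : Convex ℝ K) (hKcone : ∀ t : ℝ, 0 ≤ t → ∀ y ∈ K, t • y ∈ K)
    {a b : Y} (ha : a ∈ K) (hb : b ∈ K) : a + b ∈ K := by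
  have h := hKcv ha hb (by norm_num : (0:ℝ) ≤ 1/2) (by norm_num : (0:ℝ) ≤ 1/2) (by norm_num)
  have h2 := hKcone 2 (by norm_num) _ h
  have heq : (2:ℝ) • ((1/2 : ℝ) • a + (1/2 : ℝ) • b) = a + b := by module
  rwa [heq] at h2

private lemma scaledBall (hK : Metric.closedBall e r ⊆ K)
    (hKcone : ∀ t : ℝ, 0 ≤ t → ∀ y ∈ K, t • y ∈ K) (hK0 : (0:Y) ∈ K)
    {t : ℝ} (ht : 0 ≤ t) {z : Y} (hz : ‖z - t • e‖ ≤ t * r) : z ∈ K := by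
  rcases ht.eq_or_lt with h0 | h0
  · have hz' : ‖z‖ ≤ 0 := by simpa [← h0] using hz
    have hz0 : z = 0 := norm_le_zero_iff.mp hz'
    rwa [hz0]
  · have h1 : t⁻¹ • z ∈ Metric.closedBall e r := by
      rw [Metric.mem_closedBall, dist_eq_norm]
      have he1 : t⁻¹ • z - e = t⁻¹ • (z - t • e) := by
        rw [smul_sub, smul_smul, inv_mul_cancel₀ h0.ne', one_smul]
      rw [he1, norm_smul, Real.norm_eq_abs, abs_of_pos (inv_pos.mpr h0)]
      calc t⁻¹ * ‖z - t • e‖ ≤ t⁻¹ * (t * r) :=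
            mul_le_mul_of_nonneg_left hz (inv_pos.mpr h0).le
        _ = r := by field_simp
    have h2 := hKcone t h0.le _ (hK h1)
    rwa [smul_smul, mul_inv_cancel₀ h0.ne', one_smul] at h2

private lemma key_lb (hr : 0 < r) (hK : Metric.closedBall e r ⊆ K)
    (hKcv : Convex ℝ K) (hKcone : ∀ t : ℝ, 0 ≤ t → ∀ y ∈ K, t • y ∈ K) (hK0 : (0:Y) ∈ K)
    {w a : Y} (hw : w ∉ interior K) {t : ℝ} (ht : t • e - (a - w) ∈ K) :
    -(‖a‖ / r) ≤ t := by
  by_contra hc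
  push_neg at hc
  have h1 : ‖a‖ < -t * r := by
    have h2 : ‖a‖ / r < -t := by linarith
    calc ‖a‖ = ‖a‖ / r * r := by field_simp
      _ < -t * r := by nlinarith
  have htn : (0:ℝ) ≤ -t := by nlinarith [norm_nonneg a]
  apply hw
  rw [mem_interior]
  refine ⟨Metric.ball w (-t * r - ‖a‖), fun z hz => ?_, Metric.isOpen_ball,
    Metric.mem_ball_self (by linarith)⟩
  have hz' : ‖z - w‖ < -t * r - ‖a‖ := by rwa [Metric.mem_ball, dist_eq_norm] at hz
  have hk2 : z - t • e + a - w ∈ K := by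
    apply scaledBall hK hKcone hK0 htn
    have heq : z - t • e + a - w - (-t) • e = z - w + a := by module
    rw [heq]
    calc ‖z - w + a‖ ≤ ‖z - w‖ + ‖a‖ := norm_add_le _ _
      _ ≤ -t * r := by linarith
  have h3 := addK hKcv hKcone ht hk2
  have heq2 : t • e - (a - w) + (z - t • e + a - w) = z := by module
  rwa [heq2] at h3

private lemma psiS_mem (hr : 0 < r) (hK : Metric.closedBall e r ⊆ K)
    (hKcone : ∀ t : ℝ, 0 ≤ t → ∀ y ∈ K, t • y ∈ K) (hK0 : (0:Y) ∈ K) (y : Y) :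
    max 1 (‖y‖ / r) • e - y ∈ K := by
  apply scaledBall hK hKcone hK0 (le_trans zero_le_one (le_max_left _ _))
  have heq : max 1 (‖y‖ / r) • e - y - max 1 (‖y‖ / r) • e = -y := by abel
  rw [heq, norm_neg]
  calc ‖y‖ = ‖y‖ / r * r := by field_simp
    _ ≤ max 1 (‖y‖ / r) * r := mul_le_mul_of_nonneg_right (le_max_right _ _) hr.le

private lemma psiS_nonempty (hr : 0 < r) (hK : Metric.closedBall e r ⊆ K)
    (hKcone : ∀ t : ℝ, 0 ≤ t → ∀ y ∈ K, t • y ∈ K) (hK0 : (0:Y) ∈ K) (y : Y) :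
    {t : ℝ | t • e - y ∈ K}.Nonempty :=
  ⟨max 1 (‖y‖ / r), psiS_mem hr hK hKcone hK0 y⟩

private lemma psiS_bdd (hr : 0 < r) (hK : Metric.closedBall e r ⊆ K)
    (hKcv : Convex ℝ K) (hKcone : ∀ t : ℝ, 0 ≤ t → ∀ y ∈ K, t • y ∈ K) (hK0 : (0:Y) ∈ K)
    (h0 : (0:Y) ∉ interior K) (y : Y) : BddBelow {t : ℝ | t • e - y ∈ K} := by
  refine ⟨-(‖y‖ / r), fun t ht => ?_⟩
  exact key_lb hr hK hKcv hKcone hK0 h0 (by rwa [sub_zero])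

private lemma psi_ge (hr : 0 < r) (hK : Metric.closedBall e r ⊆ K)
    (hKcv : Convex ℝ K) (hKcone : ∀ t : ℝ, 0 ≤ t → ∀ y ∈ K, t • y ∈ K) (hK0 : (0:Y) ∈ K)
    {w : Y} (hw : w ∉ interior K) (a : Y) : -(‖a‖ / r) ≤ psiE K e (a - w) := by
  apply le_csInf (psiS_nonempty hr hK hKcone hK0 _)
  intro t ht
  exact key_lb hr hK hKcv hKcone hK0 hw ht

private lemma psi_le_max (hr : 0 < r) (hK : Metric.closedBall e r ⊆ K)
    (hKcv : Convex ℝ K) (hKcone : ∀ t : ℝ, 0 ≤ t → ∀ y ∈ K, t • y ∈ K) (hK0 : (0:Y) ∈ K)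
    (h0 : (0:Y) ∉ interior K) (y : Y) : psiE K e y ≤ max 1 (‖y‖ / r) :=
  csInf_le (psiS_bdd hr hK hKcv hKcone hK0 h0 y) (psiS_mem hr hK hKcone hK0 y)

private lemma psi_attained (hKcl : IsClosed K) (hr : 0 < r) (hK : Metric.closedBall e r ⊆ K)
    (hKcv : Convex ℝ K) (hKcone : ∀ t : ℝ, 0 ≤ t → ∀ y ∈ K, t • y ∈ K) (hK0 : (0:Y) ∈ K)
    (h0 : (0:Y) ∉ interior K) (y : Y) : psiE K e y • e - y ∈ K := by
  have hS : IsClosed {t : ℝ | t • e - y ∈ K} :=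
    hKcl.preimage ((continuous_id.smul continuous_const).sub continuous_const)
  exact hS.csInf_mem (psiS_nonempty hr hK hKcone hK0 y) (psiS_bdd hr hK hKcv hKcone hK0 h0 y)

private lemma psi_lip (hKcl : IsClosed K) (hr : 0 < r) (hK : Metric.closedBall e r ⊆ K)
    (hKcv : Convex ℝ K) (hKcone : ∀ t : ℝ, 0 ≤ t → ∀ y ∈ K, t • y ∈ K) (hK0 : (0:Y) ∈ K)
    (h0 : (0:Y) ∉ interior K) (a b : Y) : psiE K e a ≤ psiE K e b + ‖a - b‖ / r := by
  apply csInf_le (psiS_bdd hr hK hKcv hKcone hK0 h0 a)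
  show (psiE K e b + ‖a - b‖ / r) • e - a ∈ K
  have heq : (psiE K e b + ‖a - b‖ / r) • e - a
      = (psiE K e b • e - b) + ((‖a - b‖ / r) • e - (a - b)) := by module
  rw [heq]
  apply addK hKcv hKcone (psi_attained hKcl hr hK hKcv hKcone hK0 h0 b)
  apply scaledBall hK hKcone hK0 (t := ‖a - b‖ / r) (by positivity)
  have heq2 : (‖a - b‖ / r) • e - (a - b) - (‖a - b‖ / r) • e = -(a - b) := by abel
  rw [heq2, norm_neg, div_mul_cancel₀ _ hr.ne']

private lemma ereal_le_coe_of_forall {x : EReal} {w : ℝ}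
    (h : ∀ ε : ℝ, 0 < ε → x ≤ ↑(w + ε)) : x ≤ ↑w := by
  induction x using EReal.rec with
  | bot => exact bot_le
  | coe t =>
      rw [EReal.coe_le_coe_iff]
      by_contra hc
      push_neg at hc
      have h2 := (EReal.coe_le_coe_iff).mp (h ((t - w)/2) (by linarith))
      linarith
  | top =>
      have h2 := h 1 one_pos
      exact absurd (top_le_iff.mp h2) (EReal.coe_ne_top _)

end scalHelp


/-- if F is locally Lipschitz at x̄ and WMax(F(x̄),K) ≠ ∅, then f_{u,x̄} is
locally Lipschitz at x̄ (finite and Lipschitz on some neighborhood of x̄). -/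
theorem stmt12
    {X Y : Type*} [NormedAddCommGroup X] [NormedSpace ℝ X] [CompleteSpace X]
    [NormedAddCommGroup Y] [NormedSpace ℝ Y] [CompleteSpace Y]
    (K : Set Y) (e : Y) (F : X → Set Y) (Ω : Set X) (xbar : X)
    (hKcl : IsClosed K) (hKcv : Convex ℝ K)
    (hKcone : ∀ t : ℝ, 0 ≤ t → ∀ y ∈ K, t • y ∈ K)
    (hKpt : K ∩ (-K) = {0})
    (he : e ∈ interior K)
    (hΩne : Ω.Nonempty) (hΩcl : IsClosed Ω)
    (hΩdom : Ω ⊆ interior {x | (F x).Nonempty})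
    (hxΩ : xbar ∈ Ω)
    (hFlip : ∃ U ∈ 𝓝 xbar, ∃ ℓ : ℝ, 0 ≤ ℓ ∧
      ∀ x ∈ U, ∀ x' ∈ U, F x ⊆ F x' + Metric.closedBall (0 : Y) (ℓ * ‖x - x'‖))
    (hW : (wMaxSet (F xbar) K).Nonempty) :
    ∃ V ∈ 𝓝 xbar, ∃ c : ℝ,
      (∀ x ∈ V, fupp K e F xbar x ≠ ⊥ ∧ fupp K e F xbar x ≠ ⊤) ∧
      (∀ x ∈ V, ∀ x' ∈ V,
        |(fupp K e F xbar x).toReal - (fupp K e F xbar x').toReal| ≤ c * ‖x - x'‖) := by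
  obtain ⟨y0, hy0F, hy0max⟩ := hW
  obtain ⟨U, hU, ℓ, hℓ, hLip⟩ := hFlip
  have hxdom : xbar ∈ interior {x | (F x).Nonempty} := hΩdom hxΩ
  have hFxbar : (F xbar).Nonempty := interior_subset (s := {x | (F x).Nonempty}) hxdom
  by_cases h0 : (0:Y) ∈ interior K
  · -- degenerate case: Y is a zero space
    have hall : ∀ y : Y, y = 0 := by
      intro y
      rcases Metric.mem_nhds_iff.mp (mem_interior_iff_mem_nhds.mp h0) with ⟨ε, hε, hball⟩
      by_cases hy : y = 0
      · exact hy
      · exfalso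
        have hy' : 0 < ‖y‖ := norm_pos_iff.mpr hy
        have hmem : ∀ v : Y, ‖v‖ = ‖y‖ → v ∈ K := by
          intro v hv
          have h1 : (ε / (2 * ‖y‖)) • v ∈ K := by
            apply hball
            rw [Metric.mem_ball, dist_zero_right, norm_smul, Real.norm_eq_abs,
              abs_of_pos (by positivity), hv]
            rw [div_mul_eq_mul_div, mul_comm 2 ‖y‖, ← div_div, mul_div_assoc,
              div_self hy'.ne', mul_one]
            linarith
          have h2 := hKcone (2 * ‖y‖ / ε) (by positivity) _ h1
          rwa [smul_smul, div_mul_div_comm, mul_comm (2 * ‖y‖) ε,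
            div_self (by positivity : ε * (2 * ‖y‖) ≠ 0), one_smul] at h2
        have hyK : y ∈ K := hmem y rfl
        have hyK' : y ∈ -K := Set.mem_neg.mpr ?_
        · have h3 : y ∈ K ∩ (-K) := ⟨hyK, hyK'⟩
          rw [hKpt] at h3
          exact hy h3
        · exact hmem (-y) (norm_neg y)
    have hg : ∀ y : Y, gupp K e F xbar y = ((psiE K e 0 : ℝ) : EReal) := by
      intro y
      simp only [gupp]
      have hc : ∀ yb : Y, psiE K e (y - yb) = psiE K e 0 := fun yb => by rw [hall (y - yb)]
      calc (⨅ yb ∈ F xbar, ((psiE K e (y - yb) : ℝ) : EReal))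
          = ⨅ yb ∈ F xbar, ((psiE K e 0 : ℝ) : EReal) := by
            exact iInf_congr fun yb => iInf_congr fun _ => by rw [hc yb]
        _ = ((psiE K e 0 : ℝ) : EReal) := biInf_const hFxbar
    have hf : ∀ x, (F x).Nonempty → fupp K e F xbar x = ((psiE K e 0 : ℝ) : EReal) := by
      intro x hx
      simp only [fupp]
      calc (⨆ y ∈ F x, gupp K e F xbar y)
          = ⨆ y ∈ F x, ((psiE K e 0 : ℝ) : EReal) :=
            iSup_congr fun y => iSup_congr fun _ => hg y
        _ = ((psiE K e 0 : ℝ) : EReal) := biSup_const hx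
    refine ⟨interior {x | (F x).Nonempty}, isOpen_interior.mem_nhds hxdom, 0, ?_, ?_⟩
    · intro x hx
      rw [hf x (interior_subset (s := {x | (F x).Nonempty}) hx)]
      exact ⟨EReal.coe_ne_bot _, EReal.coe_ne_top _⟩
    · intro x hx x' hx'
      rw [hf x (interior_subset (s := {x | (F x).Nonempty}) hx),
        hf x' (interior_subset (s := {x | (F x).Nonempty}) hx')]
      simp
  · -- main case
    rcases Metric.mem_nhds_iff.mp (mem_interior_iff_mem_nhds.mp he) with ⟨ε, hε, hballK⟩
    set r : ℝ := ε / 2 with hrdef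
    have hr : 0 < r := by positivity
    have hrK : Metric.closedBall e r ⊆ K :=
      (Metric.closedBall_subset_ball (by rw [hrdef]; linarith)).trans hballK
    have heK : e ∈ K := interior_subset he
    have hK0 : (0:Y) ∈ K := by simpa using hKcone 0 le_rfl e heK
    set V : Set X := U ∩ interior {x | (F x).Nonempty} with hVdef
    have hV : V ∈ 𝓝 xbar := Filter.inter_mem hU (isOpen_interior.mem_nhds hxdom)
    have hxU : xbar ∈ U := mem_of_mem_nhds hU
    have hFne : ∀ x ∈ V, (F x).Nonempty := fun x hx => interior_subset (s := {x | (F x).Nonempty}) hx.2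
    have hglb : ∀ y : Y, ((-(‖y - y0‖ / r) : ℝ) : EReal) ≤ gupp K e F xbar y := by
      intro y
      simp only [gupp]
      refine le_iInf₂ fun yb hyb => ?_
      rw [EReal.coe_le_coe_iff]
      have h1 := psi_ge hr hrK hKcv hKcone hK0 (hy0max yb hyb) (y - y0)
      have heq : y - y0 - (yb - y0) = y - yb := by abel
      rwa [heq] at h1
    have hgub : ∀ y : Y, gupp K e F xbar y ≤ ((psiE K e (y - y0) : ℝ) : EReal) := by
      intro y; simp only [gupp]; exact iInf₂_le y0 hy0F
    have hgfin : ∀ y : Y, gupp K e F xbar y ≠ ⊥ ∧ gupp K e F xbar y ≠ ⊤ := by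
      intro y
      constructor
      · intro hb
        have h1 := hglb y
        rw [hb, le_bot_iff] at h1
        exact EReal.coe_ne_bot _ h1
      · intro ht
        have h1 := hgub y
        rw [ht, top_le_iff] at h1
        exact EReal.coe_ne_top _ h1
    have hgLip : ∀ (y y' : Y) (C : ℝ), ‖y - y'‖ / r ≤ C →
        gupp K e F xbar y ≤ gupp K e F xbar y' + (C : EReal) := by
      intro y y' C hC
      obtain ⟨hb, ht⟩ := hgfin y'
      set g : ℝ := (gupp K e F xbar y').toReal with hgdef
      have hg' : (g : EReal) = gupp K e F xbar y' := EReal.coe_toReal ht hb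
      have key : ∀ ε' : ℝ, 0 < ε' → gupp K e F xbar y ≤ (((g + C) + ε' : ℝ) : EReal) := by
        intro ε' hε'
        have hlt : gupp K e F xbar y' < ((g + ε' : ℝ) : EReal) := by
          rw [← hg']
          exact_mod_cast lt_add_of_pos_right g hε'
        simp only [gupp] at hlt
        rw [iInf_lt_iff] at hlt
        obtain ⟨yb, hlt⟩ := hlt
        rw [iInf_lt_iff] at hlt
        obtain ⟨hyb, hlt⟩ := hlt
        have h2 : psiE K e (y' - yb) < g + ε' := EReal.coe_lt_coe_iff.mp hlt
        have h3 : psiE K e (y - yb) ≤ psiE K e (y' - yb) + ‖y - y'‖ / r := by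
          have h4 := psi_lip hKcl hr hrK hKcv hKcone hK0 h0 (y - yb) (y' - yb)
          have heq : y - yb - (y' - yb) = y - y' := by abel
          rwa [heq] at h4
        calc gupp K e F xbar y ≤ ((psiE K e (y - yb) : ℝ) : EReal) := by
              simp only [gupp]; exact iInf₂_le yb hyb
          _ ≤ (((g + C) + ε' : ℝ) : EReal) := by
              rw [EReal.coe_le_coe_iff]; linarith
      calc gupp K e F xbar y ≤ ((g + C : ℝ) : EReal) := ereal_le_coe_of_forall key
        _ = (g : EReal) + (C : EReal) := EReal.coe_add g C
        _ = gupp K e F xbar y' + (C : EReal) := by rw [hg']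
    have hffin : ∀ x ∈ V, fupp K e F xbar x ≠ ⊥ ∧ fupp K e F xbar x ≠ ⊤ := by
      intro x hx
      obtain ⟨y, hy⟩ := hFne x hx
      constructor
      · intro hb
        have h1 : gupp K e F xbar y ≤ fupp K e F xbar x := by
          simp only [fupp]; exact le_iSup₂ (f := fun y (_ : y ∈ F x) => gupp K e F xbar y) y hy
        rw [hb, le_bot_iff] at h1
        exact (hgfin y).1 h1
      · intro htp
        have h1 : fupp K e F xbar x ≤ ((max 1 (ℓ * ‖x - xbar‖ / r) : ℝ) : EReal) := by
          simp only [fupp]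
          refine iSup₂_le fun z hz => ?_
          obtain ⟨z', hz', b, hb, hzz⟩ := Set.mem_add.mp (hLip x hx.1 xbar hxU hz)
          rw [mem_closedBall_zero_iff] at hb
          have hzb : z - z' = b := by rw [← hzz]; abel
          have h2 : gupp K e F xbar z ≤ ((psiE K e (z - z') : ℝ) : EReal) := by
            simp only [gupp]; exact iInf₂_le z' hz'
          refine h2.trans ?_
          rw [EReal.coe_le_coe_iff]
          refine (psi_le_max hr hrK hKcv hKcone hK0 h0 (z - z')).trans ?_
          apply max_le_max le_rfl
          rw [hzb]
          gcongr
        rw [htp, top_le_iff] at h1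
        exact EReal.coe_ne_top _ h1
    have hflip2 : ∀ x ∈ V, ∀ x' ∈ V,
        fupp K e F xbar x ≤ fupp K e F xbar x' + ((ℓ / r * ‖x - x'‖ : ℝ) : EReal) := by
      intro x hx x' hx'
      conv_lhs => rw [fupp]
      refine iSup₂_le fun z hz => ?_
      obtain ⟨z', hz', b, hb, hzz⟩ := Set.mem_add.mp (hLip x hx.1 x' hx'.1 hz)
      rw [mem_closedBall_zero_iff] at hb
      have hzb : z - z' = b := by rw [← hzz]; abel
      have hC : ‖z - z'‖ / r ≤ ℓ / r * ‖x - x'‖ := by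
        rw [hzb]
        calc ‖b‖ / r ≤ ℓ * ‖x - x'‖ / r := by gcongr
          _ = ℓ / r * ‖x - x'‖ := by ring
      refine (hgLip z z' _ hC).trans ?_
      refine add_le_add ?_ le_rfl
      simp only [fupp]
      exact le_iSup₂ (f := fun y (_ : y ∈ F x') => gupp K e F xbar y) z' hz'
    refine ⟨V, hV, ℓ / r, hffin, ?_⟩
    intro x hx x' hx'
    obtain ⟨hb1, ht1⟩ := hffin x hx
    obtain ⟨hb2, ht2⟩ := hffin x' hx'
    have e1 : ((fupp K e F xbar x).toReal : EReal) = fupp K e F xbar x :=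
      EReal.coe_toReal ht1 hb1
    have e2 : ((fupp K e F xbar x').toReal : EReal) = fupp K e F xbar x' :=
      EReal.coe_toReal ht2 hb2
    have h5 : (fupp K e F xbar x).toReal ≤ (fupp K e F xbar x').toReal + ℓ / r * ‖x - x'‖ := by
      have h6 := hflip2 x hx x' hx'
      rw [← e1, ← e2, ← EReal.coe_add, EReal.coe_le_coe_iff] at h6
      exact h6
    have h7 : (fupp K e F xbar x').toReal ≤ (fupp K e F xbar x).toReal + ℓ / r * ‖x - x'‖ := by
      have h6 := hflip2 x' hx' x hx
      rw [← e1, ← e2, ← EReal.coe_add, EReal.coe_le_coe_iff, norm_sub_rev] at h6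
      exact h6
    rw [abs_sub_le_iff]
    constructor <;> linarith
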